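/- Let γ < 0, C₂ > 0, and let y : ℝ → ℝ be nonnegative and continuous on [0,∞) with y(0) = y₀ > 0, differentiable at every t ≥ 0 where y(t) > 0, and satisfying y'(t) + 2C₂ y(t)^{γ+1} ≤ 0 at every t ≥ 0 where y(t) > 0. Then for every t ≥ 0, y(t) ≤ [y₀^{|γ|} − 2|γ|C₂ t]₊^{1/|γ|}, where [h]₊ = max(h, 0); in particular y(t) = 0 for all t ≥ y₀^{|γ|}/(2|γ|C₂). -/
import Mathlib


open Set

/-- Let `γ < 0`, `C₂ > 0`, and let `y : ℝ → ℝ` be nonnegative and continuous on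
`[0,∞)` with `y 0 = y₀ > 0`, differentiable at every `t ≥ 0` where `y t > 0`, and satisfying
`y' + 2C₂ y^{γ+1} ≤ 0` at every `t ≥ 0` where `y t > 0`. Then for every `t ≥ 0`,
`y t ≤ [y₀^{|γ|} − 2|γ|C₂ t]₊^{1/|γ|}`; in particular `y t = 0` for all
`t ≥ y₀^{|γ|}/(2|γ|C₂)`. -/
theorem stmt5 (γ C₂ y₀ : ℝ) (hγ : γ < 0) (hC₂ : 0 < C₂) (y : ℝ → ℝ)
    (hy0 : y 0 = y₀) (hy₀ : 0 < y₀)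
    (hnn : ∀ t, 0 ≤ t → 0 ≤ y t)
    (hcont : ContinuousOn y (Ici 0))
    (hdiff : ∀ t, 0 ≤ t → 0 < y t → DifferentiableAt ℝ y t)
    (hineq : ∀ t, 0 ≤ t → 0 < y t → deriv y t + 2 * C₂ * y t ^ (γ + 1) ≤ 0) :
    (∀ t, 0 ≤ t → y t ≤ (max (y₀ ^ |γ| - 2 * |γ| * C₂ * t) 0) ^ ((1:ℝ) / |γ|)) ∧
    (∀ t, y₀ ^ |γ| / (2 * |γ| * C₂) ≤ t → y t = 0) := by
  have ha : 0 < -γ := by linarith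
  have habs : |γ| = -γ := abs_of_neg hγ
  set a : ℝ := -γ with ha_def
  set c : ℝ := 2 * a * C₂ with hc_def
  have hc : 0 < c := by positivity
  -- key monotonicity lemma: on intervals where y > 0, t ↦ y t ^ a + c * t is antitone
  have key : ∀ s t : ℝ, 0 ≤ s → s ≤ t → (∀ u ∈ Icc s t, 0 < y u) →
      y t ^ a + c * t ≤ y s ^ a + c * s := by
    intro s t hs hst hpos
    have hIcc : Icc s t ⊆ Ici (0:ℝ) := fun u hu => le_trans hs hu.1
    have hwcont : ContinuousOn (fun u => y u ^ a + c * u) (Icc s t) := by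
      refine ContinuousOn.add ?_ ((continuous_const.mul continuous_id).continuousOn)
      exact (hcont.mono hIcc).rpow_const (fun x hx => Or.inl (ne_of_gt (hpos x hx)))
    have hder : ∀ x ∈ interior (Icc s t),
        HasDerivAt (fun u => y u ^ a + c * u)
          (deriv y x * a * y x ^ (a - 1) + c) x := by
      intro x hx
      rw [interior_Icc] at hx
      have hxI : x ∈ Icc s t := Ioo_subset_Icc_self hx
      have hx0 : 0 ≤ x := hIcc hxI
      have hxpos := hpos x hxI
      have hdy : HasDerivAt y (deriv y x) x := (hdiff x hx0 hxpos).hasDerivAt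
      have h1 : HasDerivAt (fun u => y u ^ a) (deriv y x * a * y x ^ (a - 1)) x :=
        hdy.rpow_const (Or.inl (ne_of_gt hxpos))
      have h2 : HasDerivAt (fun u => c * u) c x := by
        simpa using (hasDerivAt_id x).const_mul c
      exact h1.add h2
    have hd0 : ∀ x ∈ interior (Icc s t),
        deriv (fun u => y u ^ a + c * u) x ≤ 0 := by
      intro x hx
      rw [(hder x hx).deriv]
      rw [interior_Icc] at hx
      have hxI : x ∈ Icc s t := Ioo_subset_Icc_self hx
      have hx0 : 0 ≤ x := hIcc hxI
      have hxpos := hpos x hxI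
      have h1 : deriv y x ≤ -(2 * C₂ * y x ^ (γ + 1)) := by
        have := hineq x hx0 hxpos; linarith
      have h2 : (0:ℝ) ≤ a * y x ^ (a - 1) := by positivity
      have h3 : deriv y x * (a * y x ^ (a - 1)) ≤
          -(2 * C₂ * y x ^ (γ + 1)) * (a * y x ^ (a - 1)) :=
        mul_le_mul_of_nonneg_right h1 h2
      have h4 : y x ^ (γ + 1) * y x ^ (a - 1) = 1 := by
        rw [← Real.rpow_add hxpos]
        have : γ + 1 + (a - 1) = 0 := by rw [ha_def]; ring
        rw [this, Real.rpow_zero]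
      nlinarith [h3, h4]
    have hAnti : AntitoneOn (fun u => y u ^ a + c * u) (Icc s t) :=
      antitoneOn_of_deriv_nonpos (convex_Icc s t) hwcont
        (fun x hx => ((hder x hx).differentiableAt).differentiableWithinAt)
        hd0
    exact hAnti (left_mem_Icc.mpr hst) (right_mem_Icc.mpr hst) hst
  -- main bound
  have main : ∀ t, 0 ≤ t → y t ≤ (max (y₀ ^ a - c * t) 0) ^ ((1:ℝ) / a) := by
    intro t ht
    have hrpow_nonneg : (0:ℝ) ≤ (max (y₀ ^ a - c * t) 0) ^ ((1:ℝ) / a) :=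
      Real.rpow_nonneg (le_max_right _ _) _
    rcases eq_or_lt_of_le (hnn t ht) with h0 | hpos
    · rw [← h0]; exact hrpow_nonneg
    -- claim: y > 0 on all of [0, t]
    have hall : ∀ u ∈ Icc (0:ℝ) t, 0 < y u := by
      by_contra hcon
      push_neg at hcon
      obtain ⟨v, hv, hv0⟩ := hcon
      have hyv : y v = 0 := le_antisymm hv0 (hnn v hv.1)
      set S : Set ℝ := {s | s ∈ Icc (0:ℝ) t ∧ y s = 0} with hS_def
      have hSne : S.Nonempty := ⟨v, show v ∈ S from ⟨hv, hyv⟩⟩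
      have hSbdd : BddAbove S := ⟨t, fun x hx => hx.1.2⟩
      set s₀ : ℝ := sSup S with hs₀_def
      have hs₀mem : s₀ ∈ Icc (0:ℝ) t :=
        ⟨le_csSup_of_le hSbdd (show v ∈ S from ⟨hv, hyv⟩) hv.1, csSup_le hSne (fun x hx => hx.1.2)⟩
      have hys₀ : y s₀ = 0 := by
        obtain ⟨u, hu_mono, _, hu_tend, hu_mem⟩ :=
          (isLUB_csSup hSne hSbdd).exists_seq_monotone_tendsto hSne
        have hcw : ContinuousWithinAt y (Ici 0) s₀ := hcont s₀ hs₀mem.1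
        have htd : Filter.Tendsto (fun n => y (u n)) Filter.atTop (nhds (y s₀)) := by
          refine hcw.tendsto.comp ?_
          rw [tendsto_nhdsWithin_iff]
          exact ⟨hu_tend, Filter.Eventually.of_forall (fun n => (hu_mem n).1.1)⟩
        have hzc : Filter.Tendsto (fun _ : ℕ => (0:ℝ)) Filter.atTop (nhds (y s₀)) := by
          simpa [fun n => (hu_mem n).2] using htd
        exact (tendsto_const_nhds_iff.mp hzc).symm
      have hs₀t : s₀ < t := by
        rcases lt_or_eq_of_le hs₀mem.2 with h | h
        · exact h
        · exfalso; rw [h] at hys₀; rw [hys₀] at hpos; exact lt_irrefl 0 hpos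
      -- y > 0 on (s₀, t]
      have hpos' : ∀ u ∈ Ioc s₀ t, 0 < y u := by
        intro u hu
        rcases eq_or_lt_of_le (hnn u (le_trans hs₀mem.1 (le_of_lt hu.1))) with h | h
        · exfalso
          have hmem : u ∈ S := ⟨⟨le_trans hs₀mem.1 (le_of_lt hu.1), hu.2⟩, h.symm⟩
          exact absurd (le_csSup hSbdd hmem) (not_le.mpr hu.1)
        · exact h
      -- find u ∈ (s₀, t] with y u < y t (continuity at s₀, y s₀ = 0 < y t)
      have hcw : ContinuousWithinAt y (Ici 0) s₀ := hcont s₀ hs₀mem.1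
      have hev : ∀ᶠ u in nhdsWithin s₀ (Ici 0), y u < y t := by
        have h := hcw.tendsto
        rw [hys₀] at h
        exact h (Iio_mem_nhds hpos)
      have hclos : s₀ ∈ closure (Ioc s₀ t) := by
        rw [closure_Ioc hs₀t.ne]
        exact left_mem_Icc.mpr hs₀t.le
      have hne : (nhdsWithin s₀ (Ioc s₀ t)).NeBot :=
        mem_closure_iff_nhdsWithin_neBot.mp hclos
      have hev' : ∀ᶠ u in nhdsWithin s₀ (Ioc s₀ t), y u < y t :=
        Filter.Eventually.filter_mono
          (nhdsWithin_mono s₀ (fun u hu => le_trans hs₀mem.1 (le_of_lt hu.1))) hev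
      obtain ⟨u, hult, humem⟩ := (hev'.and (eventually_mem_nhdsWithin)).exists
      have hut : u < t := by
        rcases lt_or_eq_of_le humem.2 with h | h
        · exact h
        · exfalso; rw [h] at hult; exact lt_irrefl _ hult
      have hu0 : 0 ≤ u := le_trans hs₀mem.1 (le_of_lt humem.1)
      have hk := key u t hu0 hut.le (fun w hw => hpos' w ⟨lt_of_lt_of_le humem.1 hw.1, hw.2⟩)
      have hrg : y u ^ a < y t ^ a := Real.rpow_lt_rpow (hnn u hu0) hult ha
      have hcu : c * u < c * t := by
        exact mul_lt_mul_of_pos_left hut hc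
      linarith
    have hz := key 0 t le_rfl ht hall
    rw [hy0] at hz
    have hzt : y t ^ a ≤ max (y₀ ^ a - c * t) 0 := by
      refine le_trans ?_ (le_max_left _ _); linarith
    have h1 : (y t ^ a) ^ ((1:ℝ) / a) = y t := by
      rw [← Real.rpow_mul (hnn t ht), mul_one_div, div_self ha.ne', Real.rpow_one]
    calc y t = (y t ^ a) ^ ((1:ℝ) / a) := h1.symm
      _ ≤ (max (y₀ ^ a - c * t) 0) ^ ((1:ℝ) / a) :=
        Real.rpow_le_rpow (Real.rpow_nonneg (hnn t ht) a) hzt (by positivity)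
  constructor
  · intro t ht
    rw [habs]
    exact main t ht
  · intro t ht
    rw [habs] at ht
    have ht0 : (0:ℝ) ≤ t := le_trans (by positivity) ht
    have hb := main t ht0
    have hmx : max (y₀ ^ a - c * t) 0 = 0 := by
      refine max_eq_right ?_
      have : y₀ ^ a ≤ t * c := (div_le_iff₀ hc).mp ht
      nlinarith
    rw [hmx, Real.zero_rpow (by positivity : (1:ℝ)/a ≠ 0)] at hb
    exact le_antisymm hb (hnn t ht0)
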